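/- Let P_(·) be an irreducible G-stochastic function defined on A with gcd(A) = 1. Then all states have the same period: there exists d̂ ∈ ℕ_+ such that d_i = d̂ for every i ∈ G, where d_i = gcd{ s(𝐚) : 𝐚 a word with P_𝐚(i,i) > 0 }. -/

import Mathlib

open MeasureTheory
open scoped BigOperators

/-- The matrix of a word `𝐚 = (a_1, …, a_n)` (encoded as a list `[a_1, …, a_n]`),
namely `P_𝐚 = P_(a_n) ⋯ P_(a_1)`, so that `wordK P l i j` is the `(i,j)` entry. -/
noncomputable def wordK {G : Type*} [Fintype G] [DecidableEq G]
    (P : ℕ → G → G → ℝ) : List ℕ → G → G → ℝ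
  | [] => fun i j => if i = j then 1 else 0
  | a :: l => fun i j => ∑ m, wordK P l i m * P a m j

/-- A word over the alphabet `A`: a nonempty finite tuple with entries in `A`. -/
def IsWord (A : Set ℕ) (l : List ℕ) : Prop := l ≠ [] ∧ ∀ a ∈ l, a ∈ A

/-- `i` communicates with `j` if `P_𝐚(i,j) > 0` for some word `𝐚`. -/
def Communicates {G : Type*} [Fintype G] [DecidableEq G]
    (A : Set ℕ) (P : ℕ → G → G → ℝ) (i j : G) : Prop :=
  ∃ l : List ℕ, IsWord A l ∧ 0 < wordK P l i j

/-- `i` and `j` intercommunicate (every state intercommunicates with itself). -/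
def Intercommunicates {G : Type*} [Fintype G] [DecidableEq G]
    (A : Set ℕ) (P : ℕ → G → G → ℝ) (i j : G) : Prop :=
  i = j ∨ (Communicates A P i j ∧ Communicates A P j i)

/-- An intercommunicating class: an equivalence class of the intercommunication relation. -/
def IsInterClass {G : Type*} [Fintype G] [DecidableEq G]
    (A : Set ℕ) (P : ℕ → G → G → ℝ) (C : Set G) : Prop :=
  ∃ i : G, C = {j | Intercommunicates A P i j}

/-- A set `C` is closed if whenever `i ∈ C` communicates with `j`, then `j ∈ C`. -/
def IsClosedClass {G : Type*} [Fintype G] [DecidableEq G]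
    (A : Set ℕ) (P : ℕ → G → G → ℝ) (C : Set G) : Prop :=
  ∀ i ∈ C, ∀ j : G, Communicates A P i j → j ∈ C

/-- `d` is the greatest common divisor of the set `S ⊆ ℕ`. -/
def IsGCDOfSet (S : Set ℕ) (d : ℕ) : Prop :=
  (∀ n ∈ S, d ∣ n) ∧ ∀ e : ℕ, (∀ n ∈ S, e ∣ n) → e ∣ d

/-- The set of depths `s(𝐚)` of words `𝐚` with `P_𝐚(i,i) > 0`. -/
def ReturnDepths {G : Type*} [Fintype G] [DecidableEq G]
    (A : Set ℕ) (P : ℕ → G → G → ℝ) (i : G) : Set ℕ :=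
  {s | ∃ l : List ℕ, IsWord A l ∧ 0 < wordK P l i i ∧ l.sum = s}

/-- `E` is measurable with respect to the coordinates `(x_m)_{m < n}`. -/
def PastMeasurable {G : Type*} [MeasurableSpace G] (n : ℤ) (E : Set (ℤ → G)) : Prop :=
  MeasurableSet[MeasurableSpace.comap
    (fun x : ℤ → G => fun m : {m : ℤ // m < n} => x m.1) MeasurableSpace.pi] E

/-- `μ` is compatible with the imitation kernel
`p(g | w_{-1}, w_{-2}, …) = ∑_{k ∈ A} θ_k P_(k)(w_{-k}, g)` (here `θ` vanishes off `A`). -/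
def Compatible {G : Type*} [MeasurableSpace G] (θ : ℕ → ℝ) (P : ℕ → G → G → ℝ)
    (μ : Measure (ℤ → G)) : Prop :=
  ∀ (n : ℤ) (g : G) (E : Set (ℤ → G)), PastMeasurable n E →
    (μ (E ∩ {x | x n = g})).toReal
      = ∫ x in E, (∑' k : ℕ, θ k * P k (x (n - (k : ℤ))) g) ∂μ


lemma exists_gcd_of_set (S : Set ℕ) : ∃ d : ℕ, (∀ n ∈ S, d ∣ n) ∧ ∀ e : ℕ, (∀ n ∈ S, e ∣ n) → e ∣ d := by
  obtain ⟨g, hg⟩ := Int.subgroup_cyclic (AddSubgroup.closure ((↑) '' S : Set ℤ))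
  refine ⟨g.natAbs, ?_, ?_⟩
  · intro n hn
    have h1 : (n : ℤ) ∈ AddSubgroup.closure ((↑) '' S : Set ℤ) :=
      AddSubgroup.subset_closure ⟨n, hn, rfl⟩
    rw [hg, AddSubgroup.mem_closure_singleton] at h1
    obtain ⟨k, hk⟩ := h1
    have : g ∣ (n : ℤ) := ⟨k, by rw [← hk, smul_eq_mul]; ring⟩
    have := Int.natAbs_dvd_natAbs.mpr this
    simpa using this
  · intro e he
    have hsub : AddSubgroup.closure ((↑) '' S : Set ℤ) ≤ AddSubgroup.closure {(e : ℤ)} := by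
      rw [AddSubgroup.closure_le]
      rintro x ⟨n, hn, rfl⟩
      rw [SetLike.mem_coe, AddSubgroup.mem_closure_singleton]
      obtain ⟨c, hc⟩ := he n hn
      exact ⟨c, by push_cast [hc]; rw [smul_eq_mul]; ring⟩
    have hgmem : g ∈ AddSubgroup.closure ((↑) '' S : Set ℤ) := by
      rw [hg]; exact AddSubgroup.subset_closure rfl
    have := hsub hgmem
    rw [AddSubgroup.mem_closure_singleton] at this
    obtain ⟨k, hk⟩ := this
    have : (e : ℤ) ∣ g := ⟨k, by rw [← hk, smul_eq_mul]; ring⟩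
    have := Int.natAbs_dvd_natAbs.mpr this
    simpa using this

section WordLemmas
variable {G : Type*} [Fintype G] [DecidableEq G] (P : ℕ → G → G → ℝ)

lemma wordK_nonneg {l : List ℕ} (h : ∀ a ∈ l, ∀ i j : G, 0 ≤ P a i j) :
    ∀ i j : G, 0 ≤ wordK P l i j := by
  induction l with
  | nil => intro i j; simp [wordK]; positivity
  | cons a t ih =>
    intro i j
    simp only [wordK]
    apply Finset.sum_nonneg
    intro m _
    exact mul_nonneg (ih (fun b hb => h b (List.mem_cons_of_mem a hb)) i m)
      (h a List.mem_cons_self m j)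

lemma wordK_append (l l' : List ℕ) (i j : G) :
    wordK P (l ++ l') i j = ∑ m, wordK P l' i m * wordK P l m j := by
  induction l generalizing j with
  | nil => simp [wordK, mul_ite]
  | cons a t ih =>
    simp only [List.cons_append, wordK, List.append_eq, ih]
    simp_rw [Finset.sum_mul]
    rw [Finset.sum_comm]
    simp_rw [Finset.mul_sum, mul_assoc]

lemma wordK_append_pos {l l' : List ℕ} {i j k : G}
    (hnn : ∀ a ∈ l, ∀ i j : G, 0 ≤ P a i j) (hnn' : ∀ a ∈ l', ∀ i j : G, 0 ≤ P a i j)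
    (h1 : 0 < wordK P l i j) (h2 : 0 < wordK P l' j k) :
    0 < wordK P (l' ++ l) i k := by
  rw [wordK_append]
  apply Finset.sum_pos'
  · intro m _
    exact mul_nonneg (wordK_nonneg P hnn i m) (wordK_nonneg P hnn' m k)
  · exact ⟨j, Finset.mem_univ j, mul_pos h1 h2⟩

end WordLemmas


/-- for an irreducible `G`-stochastic function with `gcd(A) = 1`,
all states have the same period `d̂`. -/
theorem stmt_6 {G : Type*} [Fintype G] [DecidableEq G] [Nonempty G]
    (A : Set ℕ) (hA : A.Nonempty) (hApos : ∀ k ∈ A, 0 < k)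
    (P : ℕ → G → G → ℝ)
    (hPnn : ∀ k ∈ A, ∀ i j : G, 0 ≤ P k i j)
    (hProw : ∀ k ∈ A, ∀ i : G, ∑ j, P k i j = 1)
    (hirr : ∀ i j : G, Communicates A P i j)
    (hgcdA : IsGCDOfSet A 1) :
    ∃ dhat : ℕ, 0 < dhat ∧ ∀ i : G, IsGCDOfSet (ReturnDepths A P i) dhat := by
  classical
  have hgcd : ∀ i : G, ∃ d, (∀ n ∈ ReturnDepths A P i, d ∣ n) ∧
      ∀ e : ℕ, (∀ n ∈ ReturnDepths A P i, e ∣ n) → e ∣ d :=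
    fun i => exists_gcd_of_set _
  choose d hd using hgcd
  have hnnW : ∀ l : List ℕ, IsWord A l → ∀ a ∈ l, ∀ i j : G, 0 ≤ P a i j :=
    fun l hl a ha i j => hPnn a (hl.2 a ha) i j
  have hsumpos : ∀ l : List ℕ, IsWord A l → 0 < l.sum := by
    intro l hl
    cases l with
    | nil => exact absurd rfl hl.1
    | cons a t =>
      rw [List.sum_cons]
      exact Nat.lt_of_lt_of_le (hApos a (hl.2 a List.mem_cons_self))
        (Nat.le_add_right _ _)
  have hdvd : ∀ i j : G, d i ∣ d j := by
    intro i j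
    obtain ⟨l, hl, hlpos⟩ := hirr i j
    obtain ⟨l', hl', hl'pos⟩ := hirr j i
    have happ : ∀ u v : List ℕ, IsWord A u → IsWord A v → IsWord A (u ++ v) := by
      intro u v hu hv
      constructor
      · simp [hv.1]
      · intro a ha
        rcases List.mem_append.mp ha with h | h
        exacts [hu.2 a h, hv.2 a h]
    have hwordll' : IsWord A (l' ++ l) := happ l' l hl' hl
    have hbase : (l.sum + l'.sum) ∈ ReturnDepths A P i := by
      refine ⟨l' ++ l, hwordll', ?_, ?_⟩
      · exact wordK_append_pos P (hnnW l hl) (hnnW l' hl') hlpos hl'pos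
      · rw [List.sum_append]; ring
    have h1 : d i ∣ l.sum + l'.sum := (hd i).1 _ hbase
    refine (hd j).2 (d i) ?_
    rintro s ⟨m, hm, hmpos, rfl⟩
    have hmid : 0 < wordK P (m ++ l) i j :=
      wordK_append_pos P (hnnW l hl) (hnnW m hm) hlpos hmpos
    have hword2 : IsWord A (l' ++ (m ++ l)) := happ l' (m ++ l) hl' (happ m l hm hl)
    have h2 : d i ∣ m.sum + (l.sum + l'.sum) := by
      have hmem : (m.sum + (l.sum + l'.sum)) ∈ ReturnDepths A P i := by
        refine ⟨l' ++ (m ++ l), hword2, ?_, ?_⟩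
        · refine wordK_append_pos P ?_ (hnnW l' hl') hmid hl'pos
          intro a ha
          rcases List.mem_append.mp ha with h | h
          exacts [hnnW m hm a h, hnnW l hl a h]
        · simp only [List.sum_append]; ring
      exact (hd i).1 _ hmem
    have := Nat.dvd_sub h2 h1
    simpa using this
  obtain ⟨i0⟩ := ‹Nonempty G›
  refine ⟨d i0, ?_, ?_⟩
  · obtain ⟨l, hl, hlpos⟩ := hirr i0 i0
    have hmem : l.sum ∈ ReturnDepths A P i0 := ⟨l, hl, hlpos, rfl⟩
    exact Nat.pos_of_dvd_of_pos ((hd i0).1 _ hmem) (hsumpos l hl)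
  · intro i
    have hde : d i = d i0 := Nat.dvd_antisymm (hdvd i i0) (hdvd i0 i)
    exact hde ▸ hd i
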